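/- The assignment c(L_n, Y_m) = (m+μ−1)(m+μ)(m+μ+1)·δ_{n, −m−μ} (all other basis pairings zero, extended skew-symmetrically and bilinearly) defines a 2-cocycle on L_{1,μ} for μ ∈ ℤ*. -/

import Mathlib

/-- The free ℂ-module with basis {L_n, Y_n, M_n : n ∈ ℤ};
(n, 0) ↔ L_n, (n, 1) ↔ Y_n, (n, 2) ↔ M_n. -/
abbrev SVModule : Type := (ℤ × Fin 3) →₀ ℂ

/-- basis vector -/
noncomputable def sv (i : ℤ × Fin 3) : SVModule := Finsupp.single i 1

/-- The bracket of L_{λ,μ} on basis vectors. -/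
noncomputable def svBracketAux (lam mu : ℂ) (i j : ℤ × Fin 3) : SVModule :=
  let n : ℤ := i.1
  let m : ℤ := j.1
  if i.2 = 0 ∧ j.2 = 0 then ((m : ℂ) - n) • sv (m + n, 0)
  else if i.2 = 0 ∧ j.2 = 1 then ((m : ℂ) - (lam + 1) * n / 2 + mu) • sv (m + n, 1)
  else if i.2 = 1 ∧ j.2 = 0 then -(((n : ℂ) - (lam + 1) * m / 2 + mu) • sv (m + n, 1))
  else if i.2 = 1 ∧ j.2 = 1 then ((m : ℂ) - n) • sv (m + n, 2)
  else if i.2 = 0 ∧ j.2 = 2 then ((m : ℂ) - lam * n + 2 * mu) • sv (m + n, 2)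
  else if i.2 = 2 ∧ j.2 = 0 then -(((n : ℂ) - lam * m + 2 * mu) • sv (m + n, 2))
  else 0

/-- The bilinear extension of the bracket. -/
noncomputable def svBracket (lam mu : ℂ) :
    SVModule →ₗ[ℂ] SVModule →ₗ[ℂ] SVModule :=
  Finsupp.lsum ℂ fun i => LinearMap.toSpanSingleton ℂ _
    (Finsupp.lsum ℂ fun j => LinearMap.toSpanSingleton ℂ _ (svBracketAux lam mu i j))

/-- Cocycle values: c(L_n, Y_m) = (m+μ-1)(m+μ)(m+μ+1)·δ_{n, -m-μ}, extended
skew-symmetrically, all other basis pairings zero. -/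
noncomputable def cVal (mu : ℤ) (i j : ℤ × Fin 3) : ℂ :=
  if i.2 = 0 ∧ j.2 = 1 ∧ i.1 = -j.1 - mu then
    ((j.1 : ℂ) + mu - 1) * ((j.1 : ℂ) + mu) * ((j.1 : ℂ) + mu + 1)
  else if i.2 = 1 ∧ j.2 = 0 ∧ j.1 = -i.1 - mu then
    -((((i.1 : ℂ) + mu - 1) * ((i.1 : ℂ) + mu) * ((i.1 : ℂ) + mu + 1)))
  else 0

/-- The bilinear extension of the cocycle values. -/
noncomputable def cMap (mu : ℤ) : SVModule →ₗ[ℂ] SVModule →ₗ[ℂ] ℂ :=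
  Finsupp.lsum ℂ fun i => LinearMap.toSpanSingleton ℂ _
    (Finsupp.lsum ℂ fun j => LinearMap.toSpanSingleton ℂ _ (cVal mu i j))


set_option maxRecDepth 4000
set_option maxHeartbeats 1000000

lemma cMap_single (mu : ℤ) (i j : ℤ × Fin 3) (c d : ℂ) :
    cMap mu (Finsupp.single i c) (Finsupp.single j d) = c * (d * cVal mu i j) := by
  simp [cMap, LinearMap.toSpanSingleton_apply, mul_smul, smul_eq_mul]

lemma bracket_single (lam mu : ℂ) (i j : ℤ × Fin 3) (c d : ℂ) :
    svBracket lam mu (Finsupp.single i c) (Finsupp.single j d)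
      = (c * d) • svBracketAux lam mu i j := by
  rw [svBracket, Finsupp.lsum_single, LinearMap.toSpanSingleton_apply,
    LinearMap.smul_apply, Finsupp.lsum_single, LinearMap.toSpanSingleton_apply,
    smul_smul]

theorem stmt_19 (mu : ℤ) (hmu : mu ≠ 0) :
    (∀ x y : SVModule, cMap mu x y = - cMap mu y x) ∧
    (∀ x y z : SVModule,
      cMap mu (svBracket (1) (mu : ℂ) x y) z
        + cMap mu (svBracket (1) (mu : ℂ) y z) x
        + cMap mu (svBracket (1) (mu : ℂ) z x) y = 0) := by
  constructor
  · intro x y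
    induction x using Finsupp.induction_linear with
    | zero => simp
    | add f g hf hg => simp only [map_add, LinearMap.add_apply, hf, hg]; ring
    | single a b =>
      induction y using Finsupp.induction_linear with
      | zero => simp
      | add f g hf hg => simp only [map_add, LinearMap.add_apply, hf, hg]; ring
      | single c d =>
        obtain ⟨n, s⟩ := a; obtain ⟨m, t⟩ := c
        rw [cMap_single, cMap_single]
        fin_cases s <;> fin_cases t <;>
          simp [cVal, Fin.ext_iff] <;> split_ifs <;>
          first
          | ring1
          | (exfalso; omega)
  · intro x y z
    induction x using Finsupp.induction_linear with
    | zero => simp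
    | add f g hf hg =>
      simp only [map_add, LinearMap.add_apply]
      linear_combination hf + hg
    | single a b =>
      induction y using Finsupp.induction_linear with
      | zero => simp
      | add f g hf hg =>
        simp only [map_add, LinearMap.add_apply]
        linear_combination hf + hg
      | single c d =>
        induction z using Finsupp.induction_linear with
        | zero => simp
        | add f g hf hg =>
          simp only [map_add, LinearMap.add_apply]
          linear_combination hf + hg
        | single e f =>
          obtain ⟨n, s⟩ := a; obtain ⟨m, t⟩ := c; obtain ⟨k, u⟩ := e
          rw [bracket_single, bracket_single, bracket_single]
          simp only [map_smul, LinearMap.smul_apply, smul_eq_mul]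
          fin_cases s <;> fin_cases t <;> fin_cases u <;>
            simp [svBracketAux, sv, cVal, map_smul, map_neg, cMap_single, Fin.ext_iff, -Finsupp.single_mul] <;>
            split_ifs <;>
            first
            | ring1
            | (exfalso; omega)
            | (have hE : mu = -n - m - k := by omega
               subst hE; push_cast; ring1)
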